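/- For x, y ∈ (0,1), the five real numbers z₁ = x, z₂ = (1−x)/(1−xy), z₃ = (1−y)/(1−xy), z₄ = y, z₅ = 1−xy all lie in (0,1), and they satisfy 1 − zᵢ = z_{i−1}z_{i+1} for all i ∈ ℤ/5. -/

import Mathlib

/-- The explicit real 5-tuple `(x, (1−x)/(1−xy), (1−y)/(1−xy), y, 1−xy)`,
indexed by `ℤ/5`. -/
noncomputable def fiveTupleR (x y : ℝ) : ZMod 5 → ℝ := fun i =>
  if i = 0 then x
  else if i = 1 then (1 - x) / (1 - x * y)
  else if i = 2 then (1 - y) / (1 - x * y)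
  else if i = 3 then y
  else 1 - x * y

/-- For `x, y ∈ (0,1)` the five numbers `x, (1−x)/(1−xy), (1−y)/(1−xy), y, 1−xy`
all lie in `(0,1)` and satisfy `1 − zᵢ = z_{i−1}z_{i+1}` for all `i ∈ ℤ/5`. -/
theorem five_tuple_in_Ioo_and_relations (x y : ℝ)
    (hx : x ∈ Set.Ioo (0 : ℝ) 1) (hy : y ∈ Set.Ioo (0 : ℝ) 1) :
    (∀ i : ZMod 5, fiveTupleR x y i ∈ Set.Ioo (0 : ℝ) 1) ∧
    (∀ i : ZMod 5,
      1 - fiveTupleR x y i = fiveTupleR x y (i - 1) * fiveTupleR x y (i + 1)) := by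
  obtain ⟨hx0, hx1⟩ := hx
  obtain ⟨hy0, hy1⟩ := hy
  have hxy1 : x * y < 1 := by nlinarith
  have hd : (0:ℝ) < 1 - x * y := by linarith
  have hdne : (1 - x * y) ≠ 0 := ne_of_gt hd
  have e0 : fiveTupleR x y 0 = x := rfl
  have e1 : fiveTupleR x y 1 = (1 - x) / (1 - x * y) := rfl
  have e2 : fiveTupleR x y 2 = (1 - y) / (1 - x * y) := rfl
  have e3 : fiveTupleR x y 3 = y := rfl
  have e4 : fiveTupleR x y 4 = 1 - x * y := rfl
  constructor
  · intro i
    fin_cases i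
    · exact ⟨hx0, hx1⟩
    · show (1 - x) / (1 - x * y) ∈ Set.Ioo (0:ℝ) 1
      constructor
      · exact div_pos (by linarith) hd
      · rw [div_lt_one hd]; nlinarith
    · show (1 - y) / (1 - x * y) ∈ Set.Ioo (0:ℝ) 1
      constructor
      · exact div_pos (by linarith) hd
      · rw [div_lt_one hd]; nlinarith
    · exact ⟨hy0, hy1⟩
    · show 1 - x * y ∈ Set.Ioo (0:ℝ) 1
      exact ⟨hd, by nlinarith⟩
  · intro i
    fin_cases i
    · show 1 - x = (1 - x * y) * ((1 - x) / (1 - x * y))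
      field_simp
    · show 1 - (1 - x) / (1 - x * y) = x * ((1 - y) / (1 - x * y))
      field_simp; ring
    · show 1 - (1 - y) / (1 - x * y) =
        (1 - x) / (1 - x * y) * y
      rw [div_mul_eq_mul_div, one_sub_div hdne]; congr 1; ring
    · show 1 - y = (1 - y) / (1 - x * y) * (1 - x * y)
      exact (div_mul_cancel₀ (1 - y) hdne).symm
    · show 1 - (1 - x * y) = y * x
      ring
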